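/- Let q ∈ ℝ² be such that the Lozi map f (with 1 < a ≤ 2, -1 < b < 0, a+b > 1) is differentiable at all points fⁿ(q), n ≥ 0. Then there exists a one-dimensional subspace E^s_q of ℝ² such that ‖Dfⁿ(v)‖ ≤ αⁿ‖v‖ for all v ∈ E^s_q and all n ≥ 0, and Df_q(E^s_q) = E^s_{f(q)}, where α = (a-√(a²+4b))/2 < 1. -/

import Mathlib

/-- The Lozi map. -/
noncomputable def lozi (a b : ℝ) : ℝ × ℝ → ℝ × ℝ :=
  fun p => (1 + p.2 - a * |p.1|, b * p.1)

/-- The derivative of the Lozi map as a continuous linear map (s = sign of x). -/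
noncomputable def lmap (a b s : ℝ) : (ℝ × ℝ) →L[ℝ] (ℝ × ℝ) :=
  ((-(s * a)) • (ContinuousLinearMap.fst ℝ ℝ ℝ) + ContinuousLinearMap.snd ℝ ℝ ℝ).prod
    (b • ContinuousLinearMap.fst ℝ ℝ ℝ)

lemma lmap_apply (a b s : ℝ) (v : ℝ × ℝ) :
    lmap a b s v = (-(s * a) * v.1 + v.2, b * v.1) := rfl

lemma lozi_hasFDerivAt (a b : ℝ) (p : ℝ × ℝ) (hp : p.1 ≠ 0) :
    HasFDerivAt (lozi a b) (lmap a b (if p.1 < 0 then -1 else 1)) p := by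
  rcases hp.lt_or_gt with h | h
  · rw [if_pos h]
    have hA : HasFDerivAt (fun y : ℝ × ℝ => ((1 : ℝ), (0 : ℝ)) + lmap a b (-1) y)
        (lmap a b (-1)) p := (lmap a b (-1)).hasFDerivAt.const_add _
    refine hA.congr_of_eventuallyEq ?_
    have hU : {y : ℝ × ℝ | y.1 < 0} ∈ nhds p :=
      (isOpen_lt continuous_fst continuous_const).mem_nhds h
    filter_upwards [hU] with y hy
    show (1 + y.2 - a * |y.1|, b * y.1) = _
    rw [abs_of_neg hy, lmap_apply]
    simp [Prod.ext_iff]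
    ring
  · rw [if_neg (not_lt.2 h.le)]
    have hA : HasFDerivAt (fun y : ℝ × ℝ => ((1 : ℝ), (0 : ℝ)) + lmap a b 1 y)
        (lmap a b 1) p := (lmap a b 1).hasFDerivAt.const_add _
    refine hA.congr_of_eventuallyEq ?_
    have hU : {y : ℝ × ℝ | 0 < y.1} ∈ nhds p :=
      (isOpen_lt continuous_const continuous_fst).mem_nhds h
    filter_upwards [hU] with y hy
    show (1 + y.2 - a * |y.1|, b * y.1) = _
    rw [abs_of_pos hy, lmap_apply]
    simp [Prod.ext_iff]
    ring

/-- Backward iterated slope sequence: `coneSeq g s k n` is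
`g (s n) (g (s (n+1)) (⋯ (g (s (n+k-1)) 0)))`. -/
noncomputable def coneSeq (g : ℝ → ℝ → ℝ) (s : ℕ → ℝ) : ℕ → ℕ → ℝ
  | 0, _ => 0
  | (k + 1), n => g (s n) (coneSeq g s k (n + 1))

/-- Composition of the derivative maps along the orbit. -/
noncomputable def compCLM (L : ℕ → (ℝ × ℝ) →L[ℝ] (ℝ × ℝ)) : ℕ → (ℝ × ℝ) →L[ℝ] (ℝ × ℝ)
  | 0 => ContinuousLinearMap.id ℝ (ℝ × ℝ)
  | (n + 1) => (L n).comp (compCLM L n)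

/-- Existence of stable directions: if f is differentiable along the forward
orbit of q, there are one-dimensional subspaces E^s at the orbit points such
that Dfⁿ contracts vectors of E^s_q by αⁿ and Df maps E^s_{fⁿ(q)} to
E^s_{fⁿ⁺¹(q)}. -/
theorem stable_direction_exists (a b : ℝ) (ha1 : 1 < a) (ha2 : a ≤ 2)
    (hb1 : -1 < b) (hb2 : b < 0) (hab : 1 < a + b)
    (q : ℝ × ℝ)
    (hdiff : ∀ n : ℕ, DifferentiableAt ℝ (lozi a b) ((lozi a b)^[n] q)) :
    ∃ E : ℕ → Submodule ℝ (ℝ × ℝ),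
      (∀ n, Module.finrank ℝ (E n) = 1) ∧
      (∀ n, Submodule.map
          (fderiv ℝ (lozi a b) ((lozi a b)^[n] q)).toLinearMap (E n) = E (n + 1)) ∧
      (∀ v ∈ E 0, ∀ n : ℕ,
        ‖fderiv ℝ ((lozi a b)^[n]) q v‖ ≤
          ((a - Real.sqrt (a ^ 2 + 4 * b)) / 2) ^ n * ‖v‖) := by
  classical
  have ha0 : (0 : ℝ) < a := by linarith
  -- orbit points have nonzero first coordinate
  have hx : ∀ n, ((lozi a b)^[n] q).1 ≠ 0 := by
    intro n h0
    have hd := hdiff n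
    have h1 : DifferentiableAt ℝ (fun p : ℝ × ℝ => a * |p.1|) ((lozi a b)^[n] q) := by
      have heq : (fun p : ℝ × ℝ => a * |p.1|) = fun p => 1 + p.2 - (lozi a b p).1 := by
        funext p; simp [lozi]
      rw [heq]
      exact ((differentiableAt_const (1 : ℝ)).add differentiableAt_snd).sub hd.fst
    have h2 : DifferentiableAt ℝ (fun p : ℝ × ℝ => |p.1|) ((lozi a b)^[n] q) := by
      have heq2 : (fun p : ℝ × ℝ => |p.1|) = fun p : ℝ × ℝ => a⁻¹ * (a * |p.1|) := by
        funext p; field_simp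
      rw [heq2]
      exact h1.const_mul a⁻¹
    have hc : DifferentiableAt ℝ (fun t : ℝ => (t, ((lozi a b)^[n] q).2)) 0 :=
      differentiableAt_id.prodMk (differentiableAt_const _)
    rw [show ((lozi a b)^[n] q) = ((0 : ℝ), ((lozi a b)^[n] q).2) from by
      rw [← h0]] at h2
    have h3 := DifferentiableAt.comp 0 h2 hc
    exact not_differentiableAt_abs_zero (by simpa [Function.comp_def] using h3)
  -- signs along the orbit
  set s : ℕ → ℝ := fun n => if ((lozi a b)^[n] q).1 < 0 then -1 else 1 with hs_def
  have hs : ∀ n, |s n| = 1 := by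
    intro n; by_cases h : ((lozi a b)^[n] q).1 < 0 <;> simp [hs_def, h]
  have hD : ∀ n, HasFDerivAt (lozi a b) (lmap a b (s n)) ((lozi a b)^[n] q) :=
    fun n => lozi_hasFDerivAt a b _ (hx n)
  -- the numbers
  have hq2 : (0 : ℝ) < a ^ 2 + 4 * b := by nlinarith
  set r : ℝ := Real.sqrt (a ^ 2 + 4 * b) with hr_def
  have hr0 : 0 < r := Real.sqrt_pos.2 hq2
  have hr2 : r ^ 2 = a ^ 2 + 4 * b := Real.sq_sqrt hq2.le
  have hra : r < a := by nlinarith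
  set α : ℝ := (a - r) / 2 with hα_def
  set β : ℝ := (a + r) / 2 with hβ_def
  have hα0 : 0 < α := by rw [hα_def]; linarith
  have hβ1 : 1 < β := by rw [hβ_def]; nlinarith
  have hβ0 : 0 < β := by linarith
  have hαβ : α * β = -b := by rw [hα_def, hβ_def]; nlinarith
  have hsum : α + β = a := by rw [hα_def, hβ_def]; ring
  have hαβlt : α < β := by rw [hα_def, hβ_def]; linarith
  have hα1 : α < 1 := by nlinarith
  have hκ1 : α / β < 1 := (div_lt_one hβ0).2 hαβlt
  have hκ0 : 0 ≤ α / β := le_of_lt (div_pos hα0 hβ0)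
  -- slope maps
  set g : ℝ → ℝ → ℝ := fun s m => (b * m + s * a)⁻¹ with hg_def
  -- denominator bound
  have hden : ∀ t m : ℝ, |t| = 1 → |m| ≤ 1 / β → β ≤ |b * m + t * a| := by
    intro t m ht hm
    have h1 : |t * a| = a := by rw [abs_mul, ht, one_mul, abs_of_pos ha0]
    have h2 : |b * m| ≤ α := by
      have : |b * m| = (-b) * |m| := by rw [abs_mul, abs_of_neg hb2]
      rw [this]
      have hb' : (0 : ℝ) ≤ -b := by linarith
      calc (-b) * |m| ≤ (-b) * (1 / β) := by
            exact mul_le_mul_of_nonneg_left hm hb'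
        _ = α := by rw [← hαβ]; field_simp
    have h3 : |t * a| ≤ |b * m + t * a| + |b * m| := by
      calc |t * a| = |(b * m + t * a) + (-(b * m))| := by ring_nf
        _ ≤ |b * m + t * a| + |-(b * m)| := abs_add_le _ _
        _ = |b * m + t * a| + |b * m| := by rw [abs_neg]
    have := hsum
    linarith [h3, h2, h1.symm.le, h1.le]
  -- cone invariance
  have hgb : ∀ t m : ℝ, |t| = 1 → |m| ≤ 1 / β → |g t m| ≤ 1 / β := by
    intro t m ht hm
    have hd := hden t m ht hm
    show |(b * m + t * a)⁻¹| ≤ 1 / β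
    rw [abs_inv, one_div]
    exact inv_anti₀ hβ0 hd
  -- contraction
  have hlip : ∀ t u w : ℝ, |t| = 1 → |u| ≤ 1 / β → |w| ≤ 1 / β →
      |g t u - g t w| ≤ (α / β) * |u - w| := by
    intro t u w ht hu hw
    have hdu := hden t u ht hu
    have hdw := hden t w ht hw
    have hdu0 : b * u + t * a ≠ 0 := by
      intro h; rw [h] at hdu; simp at hdu; linarith
    have hdw0 : b * w + t * a ≠ 0 := by
      intro h; rw [h] at hdw; simp at hdw; linarith
    have hrw : g t u - g t w = (b * (w - u)) / ((b * u + t * a) * (b * w + t * a)) := by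
      rw [hg_def]; field_simp; ring
    rw [hrw, abs_div, abs_mul, abs_mul]
    have hnum : |b| * |w - u| = (-b) * |u - w| := by
      rw [abs_of_neg hb2, abs_sub_comm]
    have hpos : (0 : ℝ) < |b * u + t * a| * |b * w + t * a| := by positivity
    have hββ : β * β ≤ |b * u + t * a| * |b * w + t * a| :=
      mul_le_mul hdu hdw hβ0.le (abs_nonneg _)
    calc |b| * |w - u| / (|b * u + t * a| * |b * w + t * a|)
        ≤ |b| * |w - u| / (β * β) := by
          apply div_le_div_of_nonneg_left (by positivity) (by positivity) hββ
      _ = (α / β) * |u - w| := by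
          rw [hnum, ← hαβ]; field_simp
  -- the backward slope sequence
  set X : ℕ → ℕ → ℝ := coneSeq g s with hX_def
  have hX0 : ∀ n, X 0 n = 0 := fun n => rfl
  have hXs : ∀ k n, X (k + 1) n = g (s n) (X k (n + 1)) := fun k n => rfl
  have hXb : ∀ k n, |X k n| ≤ 1 / β := by
    intro k
    induction k with
    | zero => intro n; rw [hX0]; simp; positivity
    | succ k ih => intro n; rw [hXs]; exact hgb _ _ (hs n) (ih (n + 1))
  have hXc : ∀ k n, |X k n - X (k + 1) n| ≤ (1 / β) * (α / β) ^ k := by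
    intro k
    induction k with
    | zero =>
      intro n
      rw [hX0, hXs, hX0]
      simpa using hgb _ _ (hs n) (by rw [abs_zero]; positivity)
    | succ k ih =>
      intro n
      rw [hXs, hXs]
      calc |g (s n) (X k (n + 1)) - g (s n) (X (k + 1) (n + 1))|
          ≤ (α / β) * |X k (n + 1) - X (k + 1) (n + 1)| :=
            hlip _ _ _ (hs n) (hXb k (n + 1)) (hXb (k + 1) (n + 1))
        _ ≤ (α / β) * ((1 / β) * (α / β) ^ k) :=
            mul_le_mul_of_nonneg_left (ih (n + 1)) hκ0
        _ = (1 / β) * (α / β) ^ (k + 1) := by ring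
  -- convergence
  have hcauchy : ∀ n, CauchySeq (fun k => X k n) := by
    intro n
    apply cauchySeq_of_le_geometric (α / β) (1 / β) hκ1
    intro k
    rw [Real.dist_eq]
    exact hXc k n
  have hlim : ∀ n, ∃ L : ℝ, Filter.Tendsto (fun k => X k n) Filter.atTop (nhds L) :=
    fun n => cauchySeq_tendsto_of_complete (hcauchy n)
  choose m hm using hlim
  have hmb : ∀ n, |m n| ≤ 1 / β := by
    intro n
    exact le_of_tendsto (hm n).abs (Filter.Eventually.of_forall fun k => hXb k n)
  -- denominator at the limit
  have hdm : ∀ n, β ≤ |b * m (n + 1) + s n * a| := fun n => hden _ _ (hs n) (hmb (n + 1))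
  have hdm0 : ∀ n, b * m (n + 1) + s n * a ≠ 0 := by
    intro n h; have := hdm n; rw [h] at this; simp at this; linarith
  -- recurrence for the limit slopes
  have hrec : ∀ n, m n = g (s n) (m (n + 1)) := by
    intro n
    have hcont : ContinuousAt (g (s n)) (m (n + 1)) := by
      rw [hg_def]
      exact (((continuous_const.mul continuous_id').add continuous_const).continuousAt).inv₀
        (hdm0 n)
    have h1 : Filter.Tendsto (fun k => X (k + 1) n) Filter.atTop (nhds (g (s n) (m (n + 1)))) := by
      simp only [hXs]
      exact hcont.tendsto.comp (hm (n + 1))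
    have h2 : Filter.Tendsto (fun k => X (k + 1) n) Filter.atTop (nhds (m n)) :=
      (hm n).comp (Filter.tendsto_add_atTop_nat 1)
    exact tendsto_nhds_unique h2 h1
  have hm0 : ∀ n, m n ≠ 0 := by
    intro n
    rw [hrec n, hg_def]
    exact inv_ne_zero (hdm0 n)
  -- key algebraic identity
  have hkey : ∀ n, b * m n * m (n + 1) = 1 - s n * a * m n := by
    intro n
    have h1 : m n * (b * m (n + 1) + s n * a) = 1 := by
      rw [hrec n, hg_def]
      exact inv_mul_cancel₀ (hdm0 n)
    nlinarith [h1]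
  -- contraction factor of each step
  have hbm : ∀ n, |b * m n| ≤ α := by
    intro n
    rw [abs_mul, abs_of_neg hb2]
    calc (-b) * |m n| ≤ (-b) * (1 / β) :=
          mul_le_mul_of_nonneg_left (hmb n) (by linarith)
      _ = α := by rw [← hαβ]; field_simp
  have hbm0 : ∀ n, b * m n ≠ 0 := fun n => mul_ne_zero (ne_of_lt hb2) (hm0 n)
  -- the derivative maps the stable direction to the next stable direction
  have hL : ∀ n, lmap a b (s n) ((m n, 1) : ℝ × ℝ) = (b * m n) • ((m (n + 1), 1) : ℝ × ℝ) := by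
    intro n
    rw [lmap_apply]
    simp only [Prod.smul_mk, smul_eq_mul, Prod.mk.injEq]
    exact ⟨by linear_combination -hkey n, by ring⟩
  set L : ℕ → (ℝ × ℝ) →L[ℝ] (ℝ × ℝ) := fun n => lmap a b (s n) with hL_def
  -- chain rule along the orbit
  have hFD : ∀ n, HasFDerivAt ((lozi a b)^[n]) (compCLM L n) q := by
    intro n
    induction n with
    | zero => simpa [compCLM] using (hasFDerivAt_id q)
    | succ n ih =>
      rw [Function.iterate_succ']
      exact HasFDerivAt.comp q (hD n) ih
  -- contraction of the composed derivatives on the stable direction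
  have hscale : ∀ n, ∃ c : ℝ,
      compCLM L n ((m 0, 1) : ℝ × ℝ) = c • ((m n, 1) : ℝ × ℝ) ∧ |c| ≤ α ^ n := by
    intro n
    induction n with
    | zero => exact ⟨1, by simp [compCLM], by simp⟩
    | succ n ih =>
      obtain ⟨c, hc, hcb⟩ := ih
      refine ⟨c * (b * m n), ?_, ?_⟩
      · show (L n) (compCLM L n ((m 0, 1) : ℝ × ℝ)) = _
        rw [hc, map_smul]
        simp only [hL_def]
        rw [hL n, smul_smul]
      · rw [abs_mul]
        calc |c| * |b * m n| ≤ α ^ n * α :=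
              mul_le_mul hcb (hbm n) (abs_nonneg _) (pow_nonneg hα0.le n)
          _ = α ^ (n + 1) := by ring
  -- norms of the direction vectors
  have hnorm1 : ∀ n, ‖((m n, 1) : ℝ × ℝ)‖ = 1 := by
    intro n
    rw [Prod.norm_def]
    have h1 : ‖(m n : ℝ)‖ ≤ 1 := by
      rw [Real.norm_eq_abs]
      calc |m n| ≤ 1 / β := hmb n
        _ ≤ 1 := by rw [div_le_one hβ0]; linarith
    rw [show ‖(1 : ℝ)‖ = 1 from norm_one]
    exact max_eq_right h1
  -- assemble
  refine ⟨fun n => Submodule.span ℝ {((m n, 1) : ℝ × ℝ)}, ?_, ?_, ?_⟩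
  · intro n
    exact finrank_span_singleton (by simp [Prod.ext_iff])
  · intro n
    rw [(hD n).fderiv, Submodule.map_span, Set.image_singleton]
    have himg : (lmap a b (s n)).toLinearMap ((m n, 1) : ℝ × ℝ)
        = (b * m n) • ((m (n + 1), 1) : ℝ × ℝ) := hL n
    rw [himg]
    exact Submodule.span_singleton_smul_eq (isUnit_iff_ne_zero.2 (hbm0 n)) _
  · intro v hv n
    obtain ⟨c₀, rfl⟩ := Submodule.mem_span_singleton.1 hv
    rw [(hFD n).fderiv]
    obtain ⟨c, hc, hcb⟩ := hscale n
    rw [map_smul, hc, norm_smul, norm_smul, norm_smul, hnorm1, hnorm1,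
      Real.norm_eq_abs, Real.norm_eq_abs, mul_one, mul_one]
    calc |c₀| * |c| ≤ |c₀| * α ^ n := mul_le_mul_of_nonneg_left hcb (abs_nonneg _)
      _ = α ^ n * |c₀| := mul_comm _ _
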